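/- Let (Ω, 𝓕, ℙ) be a probability space, let S be a symmetric positive definite real n×n matrix and P̄xy a real m×n matrix, let X : Ω → Matrix(m,n,ℝ) satisfy E[X] = P̄xy, and let T : Ω → Matrix(n,n,ℝ) be almost surely symmetric positive definite with E[T] = S, with all matrix expressions below entrywise integrable. Define P_est = −X·T⁻¹·Xᵀ and P_ac = X·T⁻¹·S·T⁻¹·Xᵀ − P̄xy·T⁻¹·Xᵀ − X·T⁻¹·P̄xyᵀ. If E[P_ac − P_est] = 0 (the zero matrix), then the random matrix X·T⁻¹ is almost surely constant. -/

import Mathlib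

open Matrix MeasureTheory

set_option linter.unusedSectionVars false
set_option maxHeartbeats 1000000

section aux
variable {n : Type*} [Fintype n] [DecidableEq n]

lemma herm_transpose {A : Matrix n n ℝ} (hA : A.IsHermitian) : Aᵀ = A := by
  ext i j
  have h := congrFun (congrFun hA.eq i) j
  simpa [Matrix.conjTranspose_apply] using h

lemma dot_symm {M : Matrix n n ℝ} (hM : Mᵀ = M) (x y : n → ℝ) :
    x ⬝ᵥ M *ᵥ y = y ⬝ᵥ M *ᵥ x := by
  rw [Matrix.dotProduct_mulVec, ← Matrix.mulVec_transpose, hM, dotProduct_comm]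

lemma cs_aux {S : Matrix n n ℝ} (hS : S.PosDef) (u k : n → ℝ) :
    (u ⬝ᵥ S *ᵥ k) ^ 2 ≤ (u ⬝ᵥ S *ᵥ u) * (k ⬝ᵥ S *ᵥ k) := by
  have h := @real_inner_mul_inner_self_le (n → ℝ)
    (S.toSeminormedAddCommGroup hS.posSemidef) (S.toInnerProductSpace hS.posSemidef) u k
  have h2 : (u ⬝ᵥ S *ᵥ k) * (u ⬝ᵥ S *ᵥ k) ≤ (u ⬝ᵥ S *ᵥ u) * (k ⬝ᵥ S *ᵥ k) := by
    have e : ∀ x y : n → ℝ, @inner ℝ (n → ℝ) (S.toInnerProductSpace hS.posSemidef).toInner x y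
        = x ⬝ᵥ S *ᵥ y := fun x y => by
      change (S *ᵥ y) ⬝ᵥ star x = _
      rw [dotProduct_comm]; simp
    simpa only [e] using h
  nlinarith [h2]

lemma cs_bound {S : Matrix n n ℝ} (hS : S.PosDef) (p k : n → ℝ) :
    (p ⬝ᵥ k) ^ 2 ≤ (p ⬝ᵥ S⁻¹ *ᵥ p) * (k ⬝ᵥ S *ᵥ k) := by
  have hdet : IsUnit S.det := isUnit_iff_ne_zero.mpr hS.det_pos.ne'
  have hsym : Sᵀ = S := herm_transpose hS.1
  set u : n → ℝ := S⁻¹ *ᵥ p with hu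
  have hSu : S *ᵥ u = p := by
    rw [hu, Matrix.mulVec_mulVec, Matrix.mul_nonsing_inv _ hdet, Matrix.one_mulVec]
  have h1 : u ⬝ᵥ S *ᵥ k = p ⬝ᵥ k := by
    rw [dot_symm hsym u k, hSu, dotProduct_comm]
  have h2 : u ⬝ᵥ S *ᵥ u = p ⬝ᵥ S⁻¹ *ᵥ p := by
    rw [hSu, ← hu, dotProduct_comm]
  rw [← h1, ← h2]
  exact cs_aux hS u k

lemma psd_nonneg {S : Matrix n n ℝ} (hS : S.PosSemidef) (x : n → ℝ) :
    0 ≤ x ⬝ᵥ S *ᵥ x := by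
  have h := hS.dotProduct_mulVec_nonneg x
  have hx : star x = x := by funext a; simp
  rwa [hx] at h

lemma pd_pos {S : Matrix n n ℝ} (hS : S.PosDef) {x : n → ℝ} (hx : x ≠ 0) :
    0 < x ⬝ᵥ S *ᵥ x := by
  have h := hS.dotProduct_mulVec_pos hx
  have hx' : star x = x := by funext a; simp
  rwa [hx'] at h

lemma expand_quad {M : Matrix n n ℝ} (hM : Mᵀ = M) (x y : n → ℝ) :
    (x - y) ⬝ᵥ M *ᵥ (x - y) =
      x ⬝ᵥ M *ᵥ x - 2 * (y ⬝ᵥ M *ᵥ x) + y ⬝ᵥ M *ᵥ y := by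
  have hxy : x ⬝ᵥ M *ᵥ y = y ⬝ᵥ M *ᵥ x := dot_symm hM x y
  rw [Matrix.mulVec_sub, sub_dotProduct, dotProduct_sub, dotProduct_sub, hxy]
  ring

lemma quad_entry {m : Type*} [Fintype m] (A : Matrix m n ℝ) (M : Matrix n n ℝ) (i : m) :
    (A * M * Aᵀ) i i = (fun a => A i a) ⬝ᵥ M *ᵥ (fun a => A i a) := by
  simp only [Matrix.mul_apply, Matrix.transpose_apply, dotProduct, Matrix.mulVec,
    Finset.sum_mul, Finset.mul_sum]
  rw [Finset.sum_comm]
  exact Finset.sum_congr rfl fun a _ => Finset.sum_congr rfl fun b _ => by ring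

lemma matrix_identity {m : Type*} [Fintype m]
    (S Tm : Matrix n n ℝ) (Xm P : Matrix m n ℝ)
    (hsym : Tmᵀ = Tm) (hdet : IsUnit Tm.det) :
    (Xm * Tm⁻¹ * S * Tm⁻¹ * Xmᵀ - P * Tm⁻¹ * Xmᵀ - Xm * Tm⁻¹ * Pᵀ) - -(Xm * Tm⁻¹ * Xmᵀ) =
      Xm * Tm⁻¹ * (S + Tm) * (Xm * Tm⁻¹)ᵀ - P * (Xm * Tm⁻¹)ᵀ - Xm * Tm⁻¹ * Pᵀ := by
  have hti : (Xm * Tm⁻¹)ᵀ = Tm⁻¹ * Xmᵀ := by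
    rw [Matrix.transpose_mul, Matrix.transpose_nonsing_inv, hsym]
  have h1 : Xm * Tm⁻¹ * (S + Tm) * (Tm⁻¹ * Xmᵀ)
      = Xm * Tm⁻¹ * S * Tm⁻¹ * Xmᵀ + Xm * Tm⁻¹ * Xmᵀ := by
    rw [Matrix.mul_add, Matrix.add_mul]
    congr 1
    · rw [Matrix.mul_assoc (Xm * Tm⁻¹ * S) Tm⁻¹ Xmᵀ]
    · rw [Matrix.mul_assoc (Xm * Tm⁻¹) Tm (Tm⁻¹ * Xmᵀ), ← Matrix.mul_assoc Tm Tm⁻¹ Xmᵀ,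
        Matrix.mul_nonsing_inv _ hdet, Matrix.one_mul]
  rw [hti, h1, ← Matrix.mul_assoc P Tm⁻¹ Xmᵀ]
  abel

end aux

/-- **Theorem 1 of the paper (equality case).**
If the expected difference between the actual covariance change `P_ac` and the estimated
covariance change `P_est` vanishes, then the random Kalman gain `X · T⁻¹` is almost surely
constant. Expectation is taken entrywise. -/
theorem conventional_framework_equality_case
    {Ω : Type*} [MeasurableSpace Ω] (ℙ : Measure Ω) [IsProbabilityMeasure ℙ]
    {m n : ℕ} (hm : 0 < m) (hn : 0 < n)
    (S : Matrix (Fin n) (Fin n) ℝ) (hS : S.PosDef)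
    (Pxy : Matrix (Fin m) (Fin n) ℝ)
    (X : Ω → Matrix (Fin m) (Fin n) ℝ)
    (T : Ω → Matrix (Fin n) (Fin n) ℝ)
    (hTpd : ∀ᵐ ω ∂ℙ, (T ω).PosDef)
    (hXmean : (Matrix.of fun i j => ∫ ω, X ω i j ∂ℙ) = Pxy)
    (hTmean : (Matrix.of fun i j => ∫ ω, T ω i j ∂ℙ) = S)
    (Pest Pac : Ω → Matrix (Fin m) (Fin m) ℝ)
    (hPest : ∀ ω, Pest ω = -(X ω * (T ω)⁻¹ * (X ω)ᵀ))
    (hPac : ∀ ω, Pac ω =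
      X ω * (T ω)⁻¹ * S * (T ω)⁻¹ * (X ω)ᵀ
        - Pxy * (T ω)⁻¹ * (X ω)ᵀ - X ω * (T ω)⁻¹ * Pxyᵀ)
    (hXint : ∀ i j, Integrable (fun ω => X ω i j) ℙ)
    (hTint : ∀ i j, Integrable (fun ω => T ω i j) ℙ)
    (hPestInt : ∀ i j, Integrable (fun ω => Pest ω i j) ℙ)
    (hPacInt : ∀ i j, Integrable (fun ω => Pac ω i j) ℙ)
    (hzero : (Matrix.of fun i j => ∫ ω, (Pac ω - Pest ω) i j ∂ℙ) = 0) :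
    ∃ C : Matrix (Fin m) (Fin n) ℝ, ∀ᵐ ω ∂ℙ, X ω * (T ω)⁻¹ = C := by
  classical
  letI instM : MeasurableSpace (Matrix (Fin n) (Fin n) ℝ) :=
    inferInstanceAs (MeasurableSpace (Fin n → Fin n → ℝ))
  haveI instB : BorelSpace (Matrix (Fin n) (Fin n) ℝ) :=
    inferInstanceAs (BorelSpace (Fin n → Fin n → ℝ))
  set K : Ω → Matrix (Fin m) (Fin n) ℝ := fun ω => X ω * (T ω)⁻¹ with hKdef
  -- measurability of T as a matrix-valued map
  have hTae : AEMeasurable T ℙ := by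
    have h : ∀ i j, AEMeasurable (fun ω => T ω i j) ℙ := fun i j => (hTint i j).aemeasurable
    choose g hg hge using h
    refine ⟨fun ω i j => g i j ω, ?_, ?_⟩
    · exact measurable_pi_lambda _ fun i => measurable_pi_lambda _ fun j => hg i j
    · filter_upwards [ae_all_iff.2 fun i : Fin n => ae_all_iff.2 fun j : Fin n => hge i j]
        with ω hω
      funext i j
      exact hω i j
  have hinvmeas : ∀ b a : Fin n, Measurable fun M : Matrix (Fin n) (Fin n) ℝ => M⁻¹ b a := by
    intro b a
    have he : (fun M : Matrix (Fin n) (Fin n) ℝ => M⁻¹ b a)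
        = fun M => (M.det)⁻¹ * M.adjugate b a := by
      funext M
      rw [Matrix.inv_def, Matrix.smul_apply, Ring.inverse_eq_inv, smul_eq_mul]
    rw [he]
    exact ((continuous_id.matrix_det).measurable.inv).mul
      ((continuous_id.matrix_adjugate).matrix_elem b a).measurable
  have hKae : ∀ i a, AEMeasurable (fun ω => K ω i a) ℙ := by
    intro i a
    have he : (fun ω => K ω i a) = fun ω => ∑ b, X ω i b * (T ω)⁻¹ b a := by
      funext ω; simp [hKdef, Matrix.mul_apply]
    rw [he]
    exact Finset.aemeasurable_fun_sum _ fun b _ =>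
      ((hXint i b).aemeasurable).mul ((hinvmeas b a).comp_aemeasurable hTae)
  -- per-row argument
  set Kbar : Matrix (Fin m) (Fin n) ℝ := Matrix.of fun i a => ∫ ω, K ω i a ∂ℙ with hKbar
  have key : ∀ i : Fin m, ∀ᵐ ω ∂ℙ, ∀ a, K ω i a = Kbar i a := by
    intro i
    set p : Fin n → ℝ := fun a => Pxy i a with hp
    set k : Ω → Fin n → ℝ := fun ω a => K ω i a with hk
    set f : Ω → ℝ := fun ω => Pac ω i i - Pest ω i i with hf
    have hfInt : Integrable f ℙ := (hPacInt i i).sub (hPestInt i i)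
    have hfzero : ∫ ω, f ω ∂ℙ = 0 := by
      have h := congrFun (congrFun hzero i) i
      simpa [Matrix.sub_apply, hf] using h
    -- a.s. quadratic identity
    have hfq : ∀ᵐ ω ∂ℙ, f ω = (k ω) ⬝ᵥ (S + T ω) *ᵥ (k ω) - 2 * (p ⬝ᵥ k ω) := by
      filter_upwards [hTpd] with ω hpd
      have hdet : IsUnit (T ω).det := isUnit_iff_ne_zero.mpr hpd.det_pos.ne'
      have hsym : (T ω)ᵀ = T ω := herm_transpose hpd.1
      have hD : Pac ω - Pest ω =
          K ω * (S + T ω) * (K ω)ᵀ - Pxy * (K ω)ᵀ - K ω * Pxyᵀ := by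
        rw [hPac, hPest]
        exact matrix_identity S (T ω) (X ω) Pxy hsym hdet
      have hDe := congrFun (congrFun hD i) i
      have h1 : (K ω * (S + T ω) * (K ω)ᵀ) i i = (k ω) ⬝ᵥ (S + T ω) *ᵥ (k ω) :=
        quad_entry (K ω) (S + T ω) i
      have h2 : (Pxy * (K ω)ᵀ) i i = p ⬝ᵥ k ω := by
        simp [Matrix.mul_apply, dotProduct, hp, hk]
      have h3 : (K ω * Pxyᵀ) i i = p ⬝ᵥ k ω := by
        simp [Matrix.mul_apply, dotProduct, hp, hk, mul_comm]
      simp only [Matrix.sub_apply] at hDe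
      rw [h1, h2, h3] at hDe
      rw [hf]
      simp only
      rw [hDe]
      ring
    -- integrability of h := kSk
    set c : ℝ := p ⬝ᵥ S⁻¹ *ᵥ p with hc
    set h : Ω → ℝ := fun ω => (k ω) ⬝ᵥ S *ᵥ (k ω) with hh
    have hhae : AEMeasurable h ℙ := by
      have he : h = fun ω => ∑ a, K ω i a * (∑ b, S a b * K ω i b) := by
        funext ω
        simp [hh, dotProduct, Matrix.mulVec, hk]
      rw [he]
      exact Finset.aemeasurable_fun_sum _ fun a _ =>
        (hKae i a).mul (Finset.aemeasurable_fun_sum _ fun b _ => (hKae i b).const_mul (S a b))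
    have hhnn : ∀ ω, 0 ≤ h ω := fun ω => psd_nonneg hS.posSemidef (k ω)
    have hhbound : ∀ᵐ ω ∂ℙ, h ω ≤ 2 * f ω + 4 * c := by
      filter_upwards [hfq, hTpd] with ω hfe hpd
      have hT0 : 0 ≤ (k ω) ⬝ᵥ (T ω) *ᵥ (k ω) := psd_nonneg hpd.posSemidef (k ω)
      have hcs : (p ⬝ᵥ k ω) ^ 2 ≤ c * h ω := cs_bound hS p (k ω)
      have hsplit : (k ω) ⬝ᵥ (S + T ω) *ᵥ (k ω)
          = h ω + (k ω) ⬝ᵥ (T ω) *ᵥ (k ω) := by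
        rw [hh]; simp only
        rw [Matrix.add_mulVec, dotProduct_add]
      have hc0 : 0 ≤ c := psd_nonneg hS.inv.posSemidef p
      nlinarith [hfe, hcs, hhnn ω, sq_nonneg (h ω / 2 - 2 * c), sq_nonneg (p ⬝ᵥ k ω)]
    have hhInt : Integrable h ℙ := by
      refine Integrable.mono' ((hfInt.const_mul 2).add (integrable_const (4 * c)))
        hhae.aestronglyMeasurable ?_
      filter_upwards [hhbound] with ω hb
      rw [Real.norm_eq_abs, abs_of_nonneg (hhnn ω)]
      exact hb
    -- integrability of k entries
    have hkInt : ∀ a, Integrable (fun ω => k ω a) ℙ := by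
      intro a
      set ca : ℝ := (Pi.single a 1 : Fin n → ℝ) ⬝ᵥ S⁻¹ *ᵥ (Pi.single a 1) with hca
      have hbnd : ∀ ω, ‖k ω a‖ ≤ 1 + ca * h ω := by
        intro ω
        have hcs : (k ω a) ^ 2 ≤ ca * h ω := by
          have := cs_bound hS (Pi.single a 1) (k ω)
          rwa [single_dotProduct, one_mul] at this
        rw [Real.norm_eq_abs]
        nlinarith [hcs, sq_nonneg (|k ω a| - 1), sq_abs (k ω a)]
      refine Integrable.mono' ((integrable_const 1).add (hhInt.const_mul ca))
        (hKae i a).aestronglyMeasurable (Filter.Eventually.of_forall hbnd)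
    set kbar : Fin n → ℝ := fun a => ∫ ω, k ω a ∂ℙ with hkbar
    -- the nonnegative quadratic g
    set g : Ω → ℝ := fun ω => (k ω - kbar) ⬝ᵥ (S + T ω) *ᵥ (k ω - kbar) with hg
    set G : Ω → ℝ := fun ω =>
      (f ω + 2 * (p ⬝ᵥ k ω)) - 2 * ((S *ᵥ kbar) ⬝ᵥ k ω) - 2 * (∑ b, kbar b * X ω i b)
        + (kbar ⬝ᵥ S *ᵥ kbar) + (kbar ⬝ᵥ T ω *ᵥ kbar) with hG
    have hgG : g =ᵐ[ℙ] G := by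
      filter_upwards [hfq, hTpd] with ω hfe hpd
      have hdet : IsUnit (T ω).det := isUnit_iff_ne_zero.mpr hpd.det_pos.ne'
      have hsymT : (T ω)ᵀ = T ω := herm_transpose hpd.1
      have hsymS : Sᵀ = S := herm_transpose hS.1
      have hsymM : (S + T ω)ᵀ = S + T ω := by rw [Matrix.transpose_add, hsymT, hsymS]
      have hexp := expand_quad hsymM (k ω) kbar
      -- cross terms
      have hcross : kbar ⬝ᵥ (S + T ω) *ᵥ (k ω)
          = (S *ᵥ kbar) ⬝ᵥ k ω + ∑ b, kbar b * X ω i b := by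
        rw [Matrix.add_mulVec, dotProduct_add]
        congr 1
        · rw [dot_symm hsymS kbar (k ω), dotProduct_comm]
        · -- kbar ⬝ᵥ T ω *ᵥ k ω = ∑ b, kbar b * X ω i b
          have hXK : X ω = K ω * T ω := by
            rw [hKdef]
            simp only
            rw [Matrix.mul_assoc, Matrix.nonsing_inv_mul _ hdet, Matrix.mul_one]
          have hTk : (T ω) *ᵥ (k ω) = fun b => X ω i b := by
            funext b
            rw [hXK]
            simp only [Matrix.mulVec, Matrix.mul_apply, dotProduct, hk]
            exact Finset.sum_congr rfl fun a _ => by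
              have hTab : T ω a b = T ω b a := congrFun (congrFun hsymT.symm a) b
              rw [hTab]; ring
          rw [hTk]
          simp [dotProduct]
      have hq : (k ω) ⬝ᵥ (S + T ω) *ᵥ (k ω) = f ω + 2 * (p ⬝ᵥ k ω) := by
        rw [hfe]; ring
      have hMbar : kbar ⬝ᵥ (S + T ω) *ᵥ kbar
          = kbar ⬝ᵥ S *ᵥ kbar + kbar ⬝ᵥ T ω *ᵥ kbar := by
        rw [Matrix.add_mulVec, dotProduct_add]
      rw [hg, hG]
      simp only
      rw [hexp, hq, hcross, hMbar]
      ring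
    -- integrability pieces for G
    have hpkInt : Integrable (fun ω => p ⬝ᵥ k ω) ℙ := by
      have he : (fun ω => p ⬝ᵥ k ω) = fun ω => ∑ a, p a * k ω a := by
        funext ω; simp [dotProduct]
      rw [he]
      exact integrable_finset_sum _ fun a _ => (hkInt a).const_mul (p a)
    have hskInt : Integrable (fun ω => (S *ᵥ kbar) ⬝ᵥ k ω) ℙ := by
      have he : (fun ω => (S *ᵥ kbar) ⬝ᵥ k ω) = fun ω => ∑ a, (S *ᵥ kbar) a * k ω a := by
        funext ω; simp [dotProduct]
      rw [he]
      exact integrable_finset_sum _ fun a _ => (hkInt a).const_mul _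
    have hxkInt : Integrable (fun ω => ∑ b, kbar b * X ω i b) ℙ :=
      integrable_finset_sum _ fun b _ => (hXint i b).const_mul _
    have htkInt : Integrable (fun ω => kbar ⬝ᵥ T ω *ᵥ kbar) ℙ := by
      have he : (fun ω => kbar ⬝ᵥ T ω *ᵥ kbar)
          = fun ω => ∑ a, ∑ b, kbar a * kbar b * T ω a b := by
        funext ω
        simp [dotProduct, Matrix.mulVec, Finset.mul_sum]
        exact Finset.sum_congr rfl fun a _ => Finset.sum_congr rfl fun b _ => by ring
      rw [he]
      exact integrable_finset_sum _ fun a _ =>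
        integrable_finset_sum _ fun b _ => (hTint a b).const_mul _
    have I1 : Integrable (fun ω => f ω + 2 * (p ⬝ᵥ k ω)) ℙ := hfInt.add (hpkInt.const_mul 2)
    have I2 : Integrable (fun ω => f ω + 2 * (p ⬝ᵥ k ω) - 2 * ((S *ᵥ kbar) ⬝ᵥ k ω)) ℙ :=
      I1.sub (hskInt.const_mul 2)
    have I3 : Integrable (fun ω => f ω + 2 * (p ⬝ᵥ k ω) - 2 * ((S *ᵥ kbar) ⬝ᵥ k ω)
        - 2 * (∑ b, kbar b * X ω i b)) ℙ := I2.sub (hxkInt.const_mul 2)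
    have I4 : Integrable (fun ω => f ω + 2 * (p ⬝ᵥ k ω) - 2 * ((S *ᵥ kbar) ⬝ᵥ k ω)
        - 2 * (∑ b, kbar b * X ω i b) + kbar ⬝ᵥ S *ᵥ kbar) ℙ := I3.add (integrable_const _)
    have hGInt : Integrable G ℙ := by
      rw [hG]
      exact I4.add htkInt
    -- expectation of G is zero
    have hpk : ∫ ω, p ⬝ᵥ k ω ∂ℙ = p ⬝ᵥ kbar := by
      have he : (fun ω => p ⬝ᵥ k ω) = fun ω => ∑ a, p a * k ω a := by
        funext ω; simp [dotProduct]
      rw [he, integral_finset_sum _ fun a _ => (hkInt a).const_mul (p a)]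
      simp only [integral_const_mul]
      simp [dotProduct, hkbar]
    have hsk : ∫ ω, (S *ᵥ kbar) ⬝ᵥ k ω ∂ℙ = (S *ᵥ kbar) ⬝ᵥ kbar := by
      have he : (fun ω => (S *ᵥ kbar) ⬝ᵥ k ω) = fun ω => ∑ a, (S *ᵥ kbar) a * k ω a := by
        funext ω; simp [dotProduct]
      rw [he, integral_finset_sum _ fun a _ => (hkInt a).const_mul _]
      simp only [integral_const_mul]
      simp [dotProduct, hkbar]
    have hxk : ∫ ω, (∑ b, kbar b * X ω i b) ∂ℙ = kbar ⬝ᵥ p := by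
      rw [integral_finset_sum _ fun b _ => (hXint i b).const_mul _]
      simp only [integral_const_mul]
      have hPe : ∀ b, ∫ ω, X ω i b ∂ℙ = Pxy i b := fun b => congrFun (congrFun hXmean i) b
      simp only [hPe]
      simp [dotProduct, hp]
    have htk : ∫ ω, kbar ⬝ᵥ T ω *ᵥ kbar ∂ℙ = kbar ⬝ᵥ S *ᵥ kbar := by
      have he : (fun ω => kbar ⬝ᵥ T ω *ᵥ kbar)
          = fun ω => ∑ a, ∑ b, kbar a * kbar b * T ω a b := by
        funext ω
        simp [dotProduct, Matrix.mulVec, Finset.mul_sum]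
        exact Finset.sum_congr rfl fun a _ => Finset.sum_congr rfl fun b _ => by ring
      rw [he, integral_finset_sum _ fun a _ =>
        integrable_finset_sum _ fun b _ => (hTint a b).const_mul _]
      have hSe : ∀ a b, ∫ ω, T ω a b ∂ℙ = S a b := fun a b => congrFun (congrFun hTmean a) b
      have : ∀ a : Fin n, ∫ ω, (∑ b, kbar a * kbar b * T ω a b) ∂ℙ
          = ∑ b, kbar a * kbar b * S a b := by
        intro a
        rw [integral_finset_sum _ fun b _ => (hTint a b).const_mul _]
        exact Finset.sum_congr rfl fun b _ => by rw [integral_const_mul, hSe]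
      rw [Finset.sum_congr rfl fun a _ => this a]
      simp [dotProduct, Matrix.mulVec, Finset.mul_sum]
      exact Finset.sum_congr rfl fun a _ => Finset.sum_congr rfl fun b _ => by ring
    have hGzero : ∫ ω, G ω ∂ℙ = 0 := by
      rw [hG]
      simp only
      rw [integral_add I4 htkInt, integral_add I3 (integrable_const _),
          integral_sub I2 (hxkInt.const_mul 2), integral_sub I1 (hskInt.const_mul 2),
          integral_add hfInt (hpkInt.const_mul 2)]
      simp only [integral_const_mul]
      rw [hfzero, hpk, hsk, hxk, htk, integral_const]
      simp only [measure_univ, probReal_univ, ENNReal.toReal_one, smul_eq_mul, one_mul, mul_one]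
      have e1 : (S *ᵥ kbar) ⬝ᵥ kbar = kbar ⬝ᵥ S *ᵥ kbar := dotProduct_comm _ _
      have e2 : kbar ⬝ᵥ p = p ⬝ᵥ kbar := dotProduct_comm _ _
      rw [e1, e2]
      ring
    -- conclude g = 0 a.e.
    have hgInt : Integrable g ℙ := hGInt.congr hgG.symm
    have hgint0 : ∫ ω, g ω ∂ℙ = 0 := by
      rw [integral_congr_ae hgG]; exact hGzero
    have hgnn : 0 ≤ᵐ[ℙ] g := by
      filter_upwards [hTpd] with ω hpd
      exact psd_nonneg (hS.add_posSemidef hpd.posSemidef).posSemidef _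
    have hgzero : g =ᵐ[ℙ] 0 := (integral_eq_zero_iff_of_nonneg_ae hgnn hgInt).mp hgint0
    filter_upwards [hgzero, hTpd] with ω h0 hpd
    intro a
    have hM : (S + T ω).PosDef := hS.add_posSemidef hpd.posSemidef
    by_contra hne
    have hdne : k ω - kbar ≠ 0 := by
      intro hz
      apply hne
      have := congrFun hz a
      simp only [Pi.sub_apply, Pi.zero_apply, sub_eq_zero] at this
      simpa [hk, hKbar, hkbar] using this
    have hpos := pd_pos hM hdne
    have h0' : (k ω - kbar) ⬝ᵥ (S + T ω) *ᵥ (k ω - kbar) = 0 := by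
      simpa [hg] using h0
    exact absurd h0' hpos.ne'
  refine ⟨Kbar, ?_⟩
  filter_upwards [ae_all_iff.2 key] with ω hω
  ext i a
  exact hω i a
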